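/- Let ρ_AB be a bipartite state of dimension m×n, let Ψ ∈ ℂ^m⊗ℂ^n⊗ℂ^d be a purification of ρ_AB, and let {(p_i, φ_i)}_{i=1}^k be a finite ensemble of unit vectors φ_i ∈ ℂ^m⊗ℂ^n with p_i ≥ 0 and Σ_{i=1}^k p_i φ_i φ_i* = ρ_AB, where k ≤ d. Then there exists a family {Π_i}_{i=1}^k of pairwise-orthogonal orthogonal projections on ℂ^d with Σ_{i=1}^k Π_i = I_d such that for every i, tr_C(ΨΨ*(I_{mn}⊗Π_i)) = p_i φ_i φ_i* (and in particular p_i = tr(ΨΨ*(I_{mn}⊗Π_i))). -/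

import Mathlib

open scoped Kronecker ComplexOrder Matrix

noncomputable section

/-- A quantum state (density matrix): positive semidefinite with trace 1. -/
def IsState {α : Type*} [Fintype α] (ρ : Matrix α α ℂ) : Prop :=
  ρ.PosSemidef ∧ ρ.trace = 1

/-- The rank-one matrix `ψ ψ*`. -/
def vecState {α : Type*} (ψ : α → ℂ) : Matrix α α ℂ :=
  fun i j => ψ i * star (ψ j)

/-- Kronecker product of two vectors. -/
def kronVec {α β : Type*} (a : α → ℂ) (b : β → ℂ) : α × β → ℂ :=
  fun p => a p.1 * b p.2

/-- Partial trace over the first tensor factor. -/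
def ptrace1 {α β : Type*} [Fintype α] (M : Matrix (α × β) (α × β) ℂ) : Matrix β β ℂ :=
  fun k k' => ∑ i, M (i, k) (i, k')

/-- Partial trace over the second tensor factor. -/
def ptrace2 {α β : Type*} [Fintype β] (M : Matrix (α × β) (α × β) ℂ) : Matrix α α ℂ :=
  fun i i' => ∑ k, M (i, k) (i', k)

/-- Partial trace over the third factor of a triple tensor product. -/
def ptrace3 {α β γ : Type*} [Fintype γ]
    (M : Matrix (α × β × γ) (α × β × γ) ℂ) : Matrix (α × β) (α × β) ℂ :=
  fun p q => ∑ t, M (p.1, (p.2, t)) (q.1, (q.2, t))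

/-- Partial trace over the middle factor of a triple tensor product. -/
def ptraceMid {α β γ : Type*} [Fintype β]
    (M : Matrix (α × β × γ) (α × β × γ) ℂ) : Matrix (α × γ) (α × γ) ℂ :=
  fun p q => ∑ k, M (p.1, (k, p.2)) (q.1, (k, q.2))

/-- Partial trace over the primed (A' and B') factors of a state on (A⊗A')⊗(B⊗B'). -/
def ptracePrimes {α α' β β' : Type*} [Fintype α'] [Fintype β']
    (M : Matrix ((α × α') × β × β') ((α × α') × β × β') ℂ) : Matrix (α × β) (α × β) ℂ :=
  fun p q => ∑ s, ∑ t, M ((p.1, s), (p.2, t)) ((q.1, s), (q.2, t))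

/-- Partial trace over the unprimed (A and B) factors of a state on (A⊗A')⊗(B⊗B'). -/
def ptraceUnprimed {α α' β β' : Type*} [Fintype α] [Fintype β]
    (M : Matrix ((α × α') × β × β') ((α × α') × β × β') ℂ) : Matrix (α' × β') (α' × β') ℂ :=
  fun p q => ∑ i, ∑ k, M ((i, p.1), (k, p.2)) ((i, q.1), (k, q.2))

/-- Von Neumann entropy: `S(ρ) = -∑ λᵢ log λᵢ` where λᵢ are the eigenvalues. -/
def vnEntropy {α : Type*} [Fintype α] [DecidableEq α] (ρ : Matrix α α ℂ) : ℝ :=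
  if h : ρ.IsHermitian then ∑ i, Real.negMulLog (h.eigenvalues i) else 0

/-- Entanglement of formation. -/
def EoF {α β : Type*} [Fintype α] [Fintype β] [DecidableEq α]
    (ρ : Matrix (α × β) (α × β) ℂ) : ℝ :=
  sInf {x : ℝ | ∃ (k : ℕ) (p : Fin k → ℝ) (ψ : Fin k → α × β → ℂ),
    (∀ i, 0 ≤ p i) ∧ (∀ i, star (ψ i) ⬝ᵥ ψ i = 1) ∧
    (∑ i, (p i : ℂ) • vecState (ψ i)) = ρ ∧
    x = ∑ i, p i * vnEntropy (ptrace2 (vecState (ψ i)))}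

/-- Separability of a bipartite state. -/
def IsSepState {α β : Type*} [Fintype α] [Fintype β]
    (ρ : Matrix (α × β) (α × β) ℂ) : Prop :=
  ∃ (k : ℕ) (p : Fin k → ℝ) (a : Fin k → α → ℂ) (b : Fin k → β → ℂ),
    (∀ i, 0 ≤ p i) ∧ (∑ i, p i) = 1 ∧
    (∀ i, star (a i) ⬝ᵥ a i = 1) ∧ (∀ i, star (b i) ⬝ᵥ b i = 1) ∧
    ρ = ∑ i, (p i : ℂ) • (vecState (a i) ⊗ₖ vecState (b i))

/-- Classical-classical bipartite states. -/
def IsCC {α β : Type*} [Fintype α] [Fintype β] [DecidableEq α] [DecidableEq β]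
    (ρ : Matrix (α × β) (α × β) ℂ) : Prop :=
  ∃ (a : α → α → ℂ) (b : β → β → ℂ) (p : α → β → ℝ),
    (∀ i j, star (a i) ⬝ᵥ a j = if i = j then 1 else 0) ∧
    (∀ i j, star (b i) ⬝ᵥ b j = if i = j then 1 else 0) ∧
    (∀ i j, 0 ≤ p i j) ∧ (∑ i, ∑ j, p i j) = 1 ∧
    ρ = ∑ i, ∑ j, (p i j : ℂ) • (vecState (a i) ⊗ₖ vecState (b j))

/-- Quantum-classical bipartite states (classical on the second factor). -/
def IsQC {α β : Type*} [Fintype α] [Fintype β] [DecidableEq β]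
    (ρ : Matrix (α × β) (α × β) ℂ) : Prop :=
  ∃ (b : β → β → ℂ) (σ : β → Matrix α α ℂ) (p : β → ℝ),
    (∀ i j, star (b i) ⬝ᵥ b j = if i = j then 1 else 0) ∧
    (∀ i, IsState (σ i)) ∧ (∀ i, 0 ≤ p i) ∧ (∑ i, p i) = 1 ∧
    ρ = ∑ i, (p i : ℂ) • (σ i ⊗ₖ vecState (b i))

/-- A POVM: finitely many positive semidefinite operators summing to the identity. -/
def IsPOVM {γ : Type*} [Fintype γ] [DecidableEq γ] {k : ℕ}
    (P : Fin k → Matrix γ γ ℂ) : Prop :=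
  (∀ i, (P i).PosSemidef) ∧ (∑ i, P i) = 1

/-- A von Neumann measurement: pairwise-orthogonal orthogonal projections summing to I. -/
def IsVNMeas {γ : Type*} [Fintype γ] [DecidableEq γ] {k : ℕ}
    (P : Fin k → Matrix γ γ ℂ) : Prop :=
  (∀ i, (P i).IsHermitian) ∧ (∀ i, P i * P i = P i) ∧
  (∀ i j, i ≠ j → P i * P j = 0) ∧ (∑ i, P i) = 1

/-- The term `pᵢ S(ρ_A^i)` for a measurement operator `P` on the second subsystem,
with the convention that the term vanishes when `pᵢ = 0`. -/
def measTerm {α β : Type*} [Fintype α] [Fintype β] [DecidableEq α] [DecidableEq β]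
    (ρ : Matrix (α × β) (α × β) ℂ) (P : Matrix β β ℂ) : ℝ :=
  if _h : (Matrix.trace (ρ * ((1 : Matrix α α ℂ) ⊗ₖ P))).re = 0 then 0
  else (Matrix.trace (ρ * ((1 : Matrix α α ℂ) ⊗ₖ P))).re *
    vnEntropy ((((Matrix.trace (ρ * ((1 : Matrix α α ℂ) ⊗ₖ P))).re : ℂ))⁻¹ •
      ptrace2 (ρ * ((1 : Matrix α α ℂ) ⊗ₖ P)))

/-- Quantum discord with POVM measurements on the second subsystem. -/
def discordP {α β : Type*} [Fintype α] [Fintype β] [DecidableEq α] [DecidableEq β]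
    (ρ : Matrix (α × β) (α × β) ℂ) : ℝ :=
  vnEntropy (ptrace1 ρ) - vnEntropy ρ +
    sInf {x : ℝ | ∃ (k : ℕ) (P : Fin k → Matrix β β ℂ),
      IsPOVM P ∧ x = ∑ i, measTerm ρ (P i)}

/-- Quantum discord with von Neumann measurements on the second subsystem. -/
def discordN {α β : Type*} [Fintype α] [Fintype β] [DecidableEq α] [DecidableEq β]
    (ρ : Matrix (α × β) (α × β) ℂ) : ℝ :=
  vnEntropy (ptrace1 ρ) - vnEntropy ρ +
    sInf {x : ℝ | ∃ (k : ℕ) (P : Fin k → Matrix β β ℂ),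
      IsVNMeas P ∧ x = ∑ i, measTerm ρ (P i)}

/-- The trace norm `‖X‖₁ = tr √(X* X)`. -/
def traceNorm {α : Type*} [Fintype α] [DecidableEq α] (X : Matrix α α ℂ) : ℝ :=
  (((Matrix.isHermitian_conjTranspose_mul_self X).eigenvectorUnitary : Matrix α α ℂ) *
    Matrix.diagonal (((↑) : ℝ → ℂ) ∘ (Real.sqrt ∘ (Matrix.isHermitian_conjTranspose_mul_self X).eigenvalues)) *
    (star (Matrix.isHermitian_conjTranspose_mul_self X).eigenvectorUnitary : Matrix α α ℂ)).trace.re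

/-- The Frobenius norm `‖X‖₂ = √(tr (X* X))`. -/
def frobNorm {α β : Type*} [Fintype α] [Fintype β] (X : Matrix α β ℂ) : ℝ :=
  Real.sqrt (Matrix.trace (Xᴴ * X)).re

/-- Matrix logarithm taken on the support (eigenvalue 0 is sent to 0). -/
def matLog {α : Type*} [Fintype α] [DecidableEq α] (A : Matrix α α ℂ) : Matrix α α ℂ :=
  if h : A.IsHermitian then
    (Matrix.IsHermitian.eigenvectorUnitary h : Matrix α α ℂ) *
      Matrix.diagonal (fun i => if h.eigenvalues i = 0 then 0
        else (Real.log (h.eigenvalues i) : ℂ)) *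
      (star (Matrix.IsHermitian.eigenvectorUnitary h) : Matrix α α ℂ)
  else 0

end


section AuxHJW

open Matrix Module
open scoped InnerProductSpace

private lemma aux_inner_toEuclideanLin {ι : Type*} [Fintype ι] [DecidableEq ι] {d : ℕ}
    (C : Matrix (Fin d) ι ℂ) (v w : EuclideanSpace ℂ ι) :
    ⟪Matrix.toEuclideanLin C v, Matrix.toEuclideanLin C w⟫_ℂ
      = dotProduct (star (WithLp.equiv 2 (ι → ℂ) v))
          ((Cᴴ * C) *ᵥ (WithLp.equiv 2 (ι → ℂ) w)) := by
  rw [EuclideanSpace.inner_eq_star_dotProduct,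
    Matrix.ofLp_toEuclideanLin_apply, Matrix.ofLp_toEuclideanLin_apply, dotProduct_comm]
  rw [Matrix.star_mulVec, ← Matrix.mulVec_mulVec, ← Matrix.dotProduct_mulVec]
  rfl

private lemma aux_exists_unitary_of_conj_eq {ι : Type*} [Fintype ι] [DecidableEq ι] {d : ℕ}
    (A B : Matrix (Fin d) ι ℂ) (h : Aᴴ * A = Bᴴ * B) :
    ∃ U : Matrix (Fin d) (Fin d) ℂ, Uᴴ * U = 1 ∧ A = U * B := by
  set fA := Matrix.toEuclideanLin A with hfA
  set fB := Matrix.toEuclideanLin B with hfB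
  have hinner : ∀ v w : EuclideanSpace ℂ ι, ⟪fA v, fA w⟫_ℂ = ⟪fB v, fB w⟫_ℂ := by
    intro v w
    rw [hfA, hfB, aux_inner_toEuclideanLin, aux_inner_toEuclideanLin, h]
  have hnorm : ∀ v : EuclideanSpace ℂ ι, ‖fA v‖ = ‖fB v‖ := by
    intro v
    rw [@norm_eq_sqrt_re_inner ℂ, @norm_eq_sqrt_re_inner ℂ, hinner]
  have hker : LinearMap.ker fB ≤ LinearMap.ker fA := by
    intro v hv
    rw [LinearMap.mem_ker] at hv ⊢
    rw [← norm_eq_zero, hnorm, hv, norm_zero]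
  let L0lin : LinearMap.range fB →ₗ[ℂ] EuclideanSpace ℂ (Fin d) :=
    ((LinearMap.ker fB).liftQ fA hker).comp fB.quotKerEquivRange.symm.toLinearMap
  have hL0 : ∀ v : EuclideanSpace ℂ ι, ∀ hm, L0lin ⟨fB v, hm⟩ = fA v := by
    intro v hm
    simp only [L0lin, LinearMap.comp_apply, LinearEquiv.coe_toLinearMap]
    rw [LinearMap.quotKerEquivRange_symm_apply_image fB v hm]
    simp [Submodule.liftQ_apply]
  let L0 : LinearMap.range fB →ₗᵢ[ℂ] EuclideanSpace ℂ (Fin d) :=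
    { toLinearMap := L0lin
      norm_map' := by
        rintro ⟨x, hm⟩
        obtain ⟨v, rfl⟩ := id hm
        rw [hL0 v hm]
        rw [Submodule.coe_norm]
        exact (hnorm v).symm ▸ (hnorm v) }
  let L := L0.extend
  have hLB : ∀ v : EuclideanSpace ℂ ι, L (fB v) = fA v := by
    intro v
    have : (fB v) = ((⟨fB v, LinearMap.mem_range_self fB v⟩ : LinearMap.range fB) :
        EuclideanSpace ℂ (Fin d)) := rfl
    rw [this, L0.extend_apply]
    exact hL0 v _
  set U := Matrix.toEuclideanLin.symm L.toLinearMap with hUdef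
  have hU : Matrix.toEuclideanLin U = L.toLinearMap := by
    rw [hUdef, LinearEquiv.apply_symm_apply]
  refine ⟨U, ?_, ?_⟩
  · ext i j
    have h1 := L.inner_map_map ((WithLp.equiv 2 (Fin d → ℂ)).symm (Pi.single i 1))
      ((WithLp.equiv 2 (Fin d → ℂ)).symm (Pi.single j 1))
    have h2 : ∀ t : Fin d, L ((WithLp.equiv 2 (Fin d → ℂ)).symm (Pi.single t 1))
        = (WithLp.equiv 2 (Fin d → ℂ)).symm (U *ᵥ Pi.single t 1) := by
      intro t
      change L.toLinearMap _ = _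
      rw [← hU]
      rfl
    rw [h2, h2] at h1
    change (U *ᵥ Pi.single j 1) ⬝ᵥ star (U *ᵥ Pi.single i 1)
      = (Pi.single j 1 : Fin d → ℂ) ⬝ᵥ star (Pi.single i 1 : Fin d → ℂ) at h1
    rw [dotProduct_comm, dotProduct_comm (Pi.single j 1)] at h1
    have lhs : dotProduct (star (U *ᵥ Pi.single i 1)) (U *ᵥ Pi.single j 1)
        = (Uᴴ * U) i j := by
      simp [dotProduct, Matrix.mulVec_single, Matrix.mul_apply,
        Matrix.conjTranspose_apply]
    have rhs : dotProduct (star (Pi.single i 1 : Fin d → ℂ)) (Pi.single j 1)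
        = (1 : Matrix (Fin d) (Fin d) ℂ) i j := by
      simp [dotProduct, Pi.single_apply, Matrix.one_apply, eq_comm]
    rw [lhs, rhs] at h1
    exact h1
  · have hcomp : ∀ v, Matrix.toEuclideanLin (U * B) v
        = Matrix.toEuclideanLin U (Matrix.toEuclideanLin B v) := by
      intro v
      simp [Matrix.toEuclideanLin_apply, Matrix.mulVec_mulVec]
    apply Matrix.toEuclideanLin.injective
    apply LinearMap.ext
    intro v
    rw [hcomp, hU]
    exact (hLB v).symm

private lemma aux_sum_fin_dite {d k : ℕ} (hk : k ≤ d) (g : Fin k → ℂ) :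
    ∑ t : Fin d, (if h : (t : ℕ) < k then g ⟨t, h⟩ else 0) = ∑ j : Fin k, g j := by
  calc ∑ t : Fin d, (if h : (t : ℕ) < k then g ⟨t, h⟩ else 0)
      = ∑ i ∈ Finset.range d, (if h : i < k then g ⟨i, h⟩ else 0) :=
        Fin.sum_univ_eq_sum_range (fun i => if h : i < k then g ⟨i, h⟩ else 0) d
    _ = ∑ i ∈ Finset.range k, (if h : i < k then g ⟨i, h⟩ else 0) :=
        (Finset.sum_subset (Finset.range_subset_range.mpr hk) (by
          intro i _ hik
          rw [Finset.mem_range] at hik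
          simp [hik])).symm
    _ = ∑ j : Fin k, (if h : ((j : Fin k) : ℕ) < k then g ⟨j, h⟩ else 0) :=
        (Fin.sum_univ_eq_sum_range (fun i => if h : i < k then g ⟨i, h⟩ else 0) k).symm
    _ = ∑ j : Fin k, g j := Finset.sum_congr rfl fun j _ => by simp

private lemma aux_ptrace2_mul_kron {α β : Type*} [Fintype α] [Fintype β] [DecidableEq α]
    (Ψ : α × β → ℂ) (A : Matrix β β ℂ) (x y : α) :
    ptrace2 (vecState Ψ * ((1 : Matrix α α ℂ) ⊗ₖ A)) x y
      = ∑ t, ∑ s, Ψ (x, t) * star (Ψ (y, s)) * A s t := by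
  simp only [ptrace2, Matrix.mul_apply, vecState, Matrix.kroneckerMap_apply,
    Fintype.sum_prod_type, Matrix.one_apply]
  refine Finset.sum_congr rfl fun t _ => ?_
  rw [Finset.sum_comm]
  refine Finset.sum_congr rfl fun s _ => ?_
  rw [Finset.sum_eq_single y]
  · simp [mul_assoc]
  · intro z _ hz
    simp [hz]
  · simp

private lemma aux_trace_eq_sum_ptrace2 {α β : Type*} [Fintype α] [Fintype β]
    (X : Matrix (α × β) (α × β) ℂ) : X.trace = ∑ x, ptrace2 X x x := by
  simp [Matrix.trace, ptrace2, Fintype.sum_prod_type, Matrix.diag]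

end AuxHJW

/-- Given a purification `Ψ ∈ ℂ^m ⊗ ℂ^n ⊗ ℂ^d` of `ρ_AB` and an
ensemble of at most `d` pure states realizing `ρ_AB`, there is a von Neumann
measurement on the purifying system realizing that ensemble. -/
theorem exists_vn_measurement_realizing_ensemble (m n d k : ℕ) (hk : k ≤ d)
    (ρAB : Matrix (Fin m × Fin n) (Fin m × Fin n) ℂ) (hρ : IsState ρAB)
    (Ψ : (Fin m × Fin n) × Fin d → ℂ) (hΨ : star Ψ ⬝ᵥ Ψ = 1)
    (hpur : ptrace2 (vecState Ψ) = ρAB)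
    (p : Fin k → ℝ) (φ : Fin k → Fin m × Fin n → ℂ)
    (hp : ∀ i, 0 ≤ p i) (hφ : ∀ i, star (φ i) ⬝ᵥ φ i = 1)
    (hens : ∑ i, (p i : ℂ) • vecState (φ i) = ρAB) :
    ∃ P : Fin k → Matrix (Fin d) (Fin d) ℂ,
      (∀ i, (P i).IsHermitian) ∧ (∀ i, P i * P i = P i) ∧
      (∀ i j, i ≠ j → P i * P j = 0) ∧ (∑ i, P i) = 1 ∧
      (∀ i, ptrace2 (vecState Ψ * ((1 : Matrix (Fin m × Fin n) (Fin m × Fin n) ℂ) ⊗ₖ P i))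
        = (p i : ℂ) • vecState (φ i)) ∧
      (∀ i, Matrix.trace (vecState Ψ * ((1 : Matrix (Fin m × Fin n) (Fin m × Fin n) ℂ) ⊗ₖ P i))
        = (p i : ℂ)) := by
  classical
  rcases Nat.eq_zero_or_pos k with hk0 | hkpos
  · exfalso
    have h0 : ρAB = 0 := by
      subst hk0
      simpa using hens.symm
    have h1 := hρ.2
    rw [h0, Matrix.trace_zero] at h1
    exact zero_ne_one h1
  -- the ensemble matrix
  set N : Matrix (Fin m × Fin n) (Fin k) ℂ :=
    Matrix.of fun x j => (Real.sqrt (p j) : ℂ) * φ j x with hNdef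
  have hNval : ∀ (x y : Fin m × Fin n) (j : Fin k),
      N x j * star (N y j) = (p j : ℂ) * (φ j x * star (φ j y)) := by
    intro x y j
    simp only [hNdef, Matrix.of_apply, star_mul']
    rw [Complex.star_def, Complex.conj_ofReal]
    have hsq : (Real.sqrt (p j) : ℂ) * (Real.sqrt (p j) : ℂ) = (p j : ℂ) := by
      rw [← Complex.ofReal_mul, Real.mul_self_sqrt (hp j)]
    linear_combination (φ j x * (starRingEnd ℂ) (φ j y)) * hsq
  have hL : ∀ x y : Fin m × Fin n, (∑ t, Ψ (x, t) * star (Ψ (y, t))) = ρAB x y := by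
    intro x y
    have := congrFun (congrFun hpur x) y
    simpa [ptrace2, vecState] using this
  have hR : ∀ x y : Fin m × Fin n, (∑ j : Fin k, N x j * star (N y j)) = ρAB x y := by
    intro x y
    have h2 := congrFun (congrFun hens x) y
    rw [← h2]
    simp only [Matrix.sum_apply, Matrix.smul_apply, smul_eq_mul]
    refine Finset.sum_congr rfl fun j _ => ?_
    rw [hNval]
    rfl
  -- apply the unitary extension lemma
  obtain ⟨U, hU1, hU2⟩ := aux_exists_unitary_of_conj_eq
    (Matrix.of fun (t : Fin d) x => star (Ψ (x, t)))
    (Matrix.of fun (t : Fin d) x => if h : (t : ℕ) < k then star (N x ⟨t, h⟩) else 0)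
    (by
      ext x y
      simp only [Matrix.mul_apply, Matrix.conjTranspose_apply, Matrix.of_apply]
      rw [show (∑ t, star (star (Ψ (x, t))) * star (Ψ (y, t)))
          = ∑ t, Ψ (x, t) * star (Ψ (y, t)) by
        exact Finset.sum_congr rfl fun t _ => by rw [star_star]]
      rw [hL]
      rw [show (∑ t : Fin d, star (if h : (t : ℕ) < k then star (N x ⟨t, h⟩) else 0) *
            (if h : (t : ℕ) < k then star (N y ⟨t, h⟩) else 0))
          = ∑ t : Fin d, (if h : (t : ℕ) < k then N x ⟨t, h⟩ * star (N y ⟨t, h⟩) else 0) by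
        refine Finset.sum_congr rfl fun t _ => ?_
        by_cases h : (t : ℕ) < k
        · simp [h]
        · simp [h]]
      rw [aux_sum_fin_dite hk (fun j => N x j * star (N y j)), hR])
  -- the isometry columns
  set W : Fin d → Fin k → ℂ := fun t j => U t (Fin.castLE hk j) with hWdef
  have horto : ∀ i j : Fin k, (∑ t, star (W t i) * W t j) = if i = j then 1 else 0 := by
    intro i j
    have h3 := congrFun (congrFun hU1 (Fin.castLE hk i)) (Fin.castLE hk j)
    simp only [Matrix.mul_apply, Matrix.conjTranspose_apply, Matrix.one_apply] at h3
    rw [hWdef]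
    simp only []
    rw [h3]
    simp [Fin.castLE_inj]
  have hpsi : ∀ (x : Fin m × Fin n) (t : Fin d),
      Ψ (x, t) = ∑ j, N x j * star (W t j) := by
    intro x t
    have h4 := congrFun (congrFun hU2 t) x
    simp only [Matrix.mul_apply, Matrix.of_apply] at h4
    have h5 : Ψ (x, t) = star (∑ s, U t s *
        (if h : (s : ℕ) < k then star (N x ⟨s, h⟩) else 0)) := by
      rw [← h4, star_star]
    rw [h5, star_sum]
    rw [show (∑ s : Fin d, star (U t s * (if h : (s : ℕ) < k then star (N x ⟨s, h⟩) else 0)))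
        = ∑ s : Fin d, (if h : (s : ℕ) < k then
            N x ⟨s, h⟩ * star (U t (Fin.castLE hk ⟨s, h⟩)) else 0) by
      refine Finset.sum_congr rfl fun s _ => ?_
      by_cases h : (s : ℕ) < k
      · simp only [dif_pos h, star_mul, star_star]
        congr
      · simp [h]]
    rw [aux_sum_fin_dite hk (fun j => N x j * star (U t (Fin.castLE hk j)))]
  have hc : ∀ (i : Fin k) (x : Fin m × Fin n), (∑ t, Ψ (x, t) * W t i) = N x i := by
    intro i x
    calc (∑ t, Ψ (x, t) * W t i)
        = ∑ t, ∑ j, N x j * star (W t j) * W t i := by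
          refine Finset.sum_congr rfl fun t _ => ?_
          rw [hpsi x t, Finset.sum_mul]
      _ = ∑ j, N x j * ∑ t, star (W t j) * W t i := by
          rw [Finset.sum_comm]
          refine Finset.sum_congr rfl fun j _ => ?_
          rw [Finset.mul_sum]
          exact Finset.sum_congr rfl fun t _ => by ring
      _ = N x i := by
          simp only [horto]
          simp
  -- the projections
  set i0 : Fin k := ⟨0, hkpos⟩ with hi0
  set Pr1 : Fin k → Matrix (Fin d) (Fin d) ℂ :=
    fun i => Matrix.of fun s t => star (W s i) * W t i with hPr1
  set R : Matrix (Fin d) (Fin d) ℂ := ∑ i, Pr1 i with hRdef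
  set Q : Matrix (Fin d) (Fin d) ℂ := 1 - R with hQdef
  set P : Fin k → Matrix (Fin d) (Fin d) ℂ :=
    fun i => Pr1 i + if i = i0 then Q else 0 with hPdef
  have hmulPi : ∀ i j : Fin k, Pr1 i * Pr1 j = if i = j then Pr1 i else 0 := by
    intro i j
    have hcore : ∀ s t, (Pr1 i * Pr1 j) s t
        = star (W s i) * W t j * (if j = i then 1 else 0) := by
      intro s t
      simp only [Matrix.mul_apply, hPr1, Matrix.of_apply]
      rw [← horto j i, Finset.mul_sum]
      exact Finset.sum_congr rfl fun u _ => by ring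
    by_cases h : i = j
    · subst h
      rw [if_pos rfl]
      ext s t
      rw [hcore]
      simp [hPr1]
    · rw [if_neg h]
      ext s t
      rw [hcore]
      simp [Ne.symm h]
  have hRP : ∀ i, R * Pr1 i = Pr1 i := by
    intro i
    rw [hRdef, Finset.sum_mul]
    simp only [hmulPi]
    simp
  have hPR : ∀ i, Pr1 i * R = Pr1 i := by
    intro i
    rw [hRdef, Finset.mul_sum]
    simp only [hmulPi]
    simp
  have hQP : ∀ i, Q * Pr1 i = 0 := by
    intro i
    rw [hQdef, Matrix.sub_mul, Matrix.one_mul, hRP, sub_self]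
  have hPQ : ∀ i, Pr1 i * Q = 0 := by
    intro i
    rw [hQdef, Matrix.mul_sub, Matrix.mul_one, hPR, sub_self]
  have hRR : R * R = R := by
    rw [hRdef, Finset.mul_sum]
    rw [show (∑ i, (∑ j, Pr1 j) * Pr1 i) = ∑ i, Pr1 i from
      Finset.sum_congr rfl fun i _ => by rw [← hRdef]; exact hRP i]
  have hQQ : Q * Q = Q := by
    rw [hQdef, Matrix.sub_mul, Matrix.one_mul, Matrix.mul_sub, Matrix.mul_one, hRR]
    abel
  have hPiH : ∀ i, (Pr1 i)ᴴ = Pr1 i := by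
    intro i
    ext s t
    simp only [Matrix.conjTranspose_apply, hPr1, Matrix.of_apply, star_mul, star_star]
  have hQH : Qᴴ = Q := by
    rw [hQdef, Matrix.conjTranspose_sub, Matrix.conjTranspose_one, hRdef,
      Matrix.conjTranspose_sum]
    simp only [hPiH]
  -- the scalar partial-trace computation
  have hSum1 : ∀ (i : Fin k) (x y : Fin m × Fin n),
      (∑ t, ∑ s, Ψ (x, t) * star (Ψ (y, s)) * (star (W s i) * W t i))
        = N x i * star (N y i) := by
    intro i x y
    have hstar : (∑ s, star (Ψ (y, s)) * star (W s i)) = star (N y i) := by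
      rw [← hc i y, star_sum]
      exact Finset.sum_congr rfl fun s _ => by rw [star_mul]; ring
    calc (∑ t, ∑ s, Ψ (x, t) * star (Ψ (y, s)) * (star (W s i) * W t i))
        = (∑ t, Ψ (x, t) * W t i) * ∑ s, star (Ψ (y, s)) * star (W s i) := by
          rw [Finset.sum_mul_sum]
          exact Finset.sum_congr rfl fun t _ => Finset.sum_congr rfl fun s _ => by ring
      _ = N x i * star (N y i) := by rw [hc i x, hstar]
  have hQzero : ∀ x y : Fin m × Fin n,
      (∑ t, ∑ s, Ψ (x, t) * star (Ψ (y, s)) * Q s t) = 0 := by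
    intro x y
    have hQentry : ∀ s t, Q s t = (if s = t then 1 else 0) - ∑ j, star (W s j) * W t j := by
      intro s t
      rw [hQdef, Matrix.sub_apply, Matrix.one_apply, hRdef, Matrix.sum_apply]
      simp [hPr1]
    calc (∑ t, ∑ s, Ψ (x, t) * star (Ψ (y, s)) * Q s t)
        = (∑ t, ∑ s, Ψ (x, t) * star (Ψ (y, s)) * (if s = t then 1 else 0))
          - ∑ t, ∑ s, ∑ j, Ψ (x, t) * star (Ψ (y, s)) * (star (W s j) * W t j) := by
          simp only [← Finset.sum_sub_distrib]
          refine Finset.sum_congr rfl fun t _ => Finset.sum_congr rfl fun s _ => ?_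
          rw [hQentry, mul_sub, Finset.mul_sum]
      _ = (∑ t, ∑ s, Ψ (x, t) * star (Ψ (y, s)) * (if s = t then 1 else 0))
          - ∑ j, ∑ t, ∑ s, Ψ (x, t) * star (Ψ (y, s)) * (star (W s j) * W t j) := by
          congr 1
          have h1 : ∀ t : Fin d, (∑ s : Fin d, ∑ j : Fin k,
              Ψ (x, t) * star (Ψ (y, s)) * (star (W s j) * W t j))
              = ∑ j : Fin k, ∑ s : Fin d,
                Ψ (x, t) * star (Ψ (y, s)) * (star (W s j) * W t j) :=
            fun t => Finset.sum_comm
          simp only [h1]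
          exact Finset.sum_comm
      _ = ρAB x y - ρAB x y := by
          rw [show (∑ t, ∑ s, Ψ (x, t) * star (Ψ (y, s)) * (if s = t then 1 else 0))
              = ∑ t, Ψ (x, t) * star (Ψ (y, t)) from Finset.sum_congr rfl fun t _ => by
            rw [Finset.sum_eq_single t (fun s _ hs => by simp [hs]) (by simp)]
            simp]
          rw [hL]
          rw [show (∑ j, ∑ t, ∑ s, Ψ (x, t) * star (Ψ (y, s)) * (star (W s j) * W t j))
              = ∑ j : Fin k, N x j * star (N y j) from
            Finset.sum_congr rfl fun j _ => hSum1 j x y]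
          rw [hR]
      _ = 0 := sub_self _
  have hptrP : ∀ i, ptrace2 (vecState Ψ *
      ((1 : Matrix (Fin m × Fin n) (Fin m × Fin n) ℂ) ⊗ₖ P i))
        = (p i : ℂ) • vecState (φ i) := by
    intro i
    ext x y
    rw [aux_ptrace2_mul_kron]
    have hPentry : ∀ s t, P i s t = Pr1 i s t + (if i = i0 then Q else 0) s t := by
      intro s t
      rw [hPdef]
      simp [Matrix.add_apply]
    calc (∑ t, ∑ s, Ψ (x, t) * star (Ψ (y, s)) * P i s t)
        = (∑ t, ∑ s, Ψ (x, t) * star (Ψ (y, s)) * (star (W s i) * W t i))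
          + ∑ t, ∑ s, Ψ (x, t) * star (Ψ (y, s)) * (if i = i0 then Q else 0) s t := by
          rw [← Finset.sum_add_distrib]
          refine Finset.sum_congr rfl fun t _ => ?_
          rw [← Finset.sum_add_distrib]
          refine Finset.sum_congr rfl fun s _ => ?_
          rw [hPentry, mul_add]
          rfl
      _ = N x i * star (N y i) + 0 := by
          rw [hSum1]
          congr 1
          by_cases h : i = i0
          · simp only [h, if_true, eq_self_iff_true]
            exact hQzero x y
          · simp only [if_neg h, Matrix.zero_apply, mul_zero, Finset.sum_const_zero]
      _ = ((p i : ℂ) • vecState (φ i)) x y := by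
          rw [add_zero, hNval]
          simp [vecState, Matrix.smul_apply]
  refine ⟨P, ?_, ?_, ?_, ?_, hptrP, ?_⟩
  · -- Hermitian
    intro i
    unfold Matrix.IsHermitian
    simp only [hPdef, Matrix.conjTranspose_add]
    rw [hPiH]
    congr 1
    by_cases h : i = i0
    · rw [if_pos h, hQH]
    · rw [if_neg h]
      exact Matrix.conjTranspose_zero
  · -- idempotent
    intro i
    simp only [hPdef]
    by_cases h : i = i0
    · rw [if_pos h, Matrix.add_mul, Matrix.mul_add, Matrix.mul_add, hmulPi, if_pos rfl,
        hPQ, hQP, hQQ]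
      simp
    · rw [if_neg h]
      rw [add_zero, hmulPi, if_pos rfl]
  · -- orthogonal
    intro i j hij
    simp only [hPdef]
    rw [Matrix.add_mul, Matrix.mul_add, Matrix.mul_add, hmulPi, if_neg hij]
    by_cases hi : i = i0 <;> by_cases hj : j = i0
    · exact absurd (hi.trans hj.symm) hij
    · rw [if_pos hi, if_neg hj, hQP]
      simp
    · rw [if_neg hi, if_pos hj, hPQ]
      simp
    · rw [if_neg hi, if_neg hj]
      simp
  · -- sum
    simp only [hPdef]
    rw [Finset.sum_add_distrib, ← hRdef, Finset.sum_ite_eq' Finset.univ i0 (fun _ => Q)]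
    rw [if_pos (Finset.mem_univ i0), hQdef]
    abel
  · -- trace
    intro i
    rw [aux_trace_eq_sum_ptrace2, hptrP i]
    have : (∑ x, ((p i : ℂ) • vecState (φ i)) x x) = (p i : ℂ) * ∑ x, φ i x * star (φ i x) := by
      rw [Finset.mul_sum]
      refine Finset.sum_congr rfl fun x _ => ?_
      simp [vecState, Matrix.smul_apply]
    rw [this]
    have hφ1 : (∑ x, φ i x * star (φ i x)) = 1 := by
      rw [← hφ i]
      simp only [dotProduct, Pi.star_apply]
      exact Finset.sum_congr rfl fun x _ => mul_comm _ _
    rw [hφ1, mul_one]
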